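/- Let β ∈ (0,1), a, b, w > 0, p ∈ (0,1) with a/w^p < 1. Suppose a nonnegative sequence {B(t)} satisfies B(0) = 0 and B(t+1) ≤ (1 - a/(t+w)^p) B(t) + bβ^t/(t+w)^p for all t ≥ 0. Then for all t ≥ 0, B(t+1) ≤ (b/(w^p(1-β)))·(e^{-(a/2)·t/(t+1+w)^p} + β^{⌊t/2⌋}). -/

import Mathlib

theorem geometric_perturbation_estimate_p_lt_one
    (β a b w p : ℝ) (hβ : β ∈ Set.Ioo (0 : ℝ) 1)
    (ha : 0 < a) (hb : 0 < b) (hw : 0 < w)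
    (hp : 0 < p) (hp1 : p < 1) (hstep : a / w ^ p < 1)
    (B : ℕ → ℝ) (hBnonneg : ∀ t, 0 ≤ B t) (hB0 : B 0 = 0)
    (hrec : ∀ t : ℕ, B (t + 1) ≤
      (1 - a / ((t : ℝ) + w) ^ p) * B t + b * β ^ t / ((t : ℝ) + w) ^ p) :
    ∀ t : ℕ, B (t + 1) ≤ b / (w ^ p * (1 - β)) *
      (Real.exp (-(a / 2) * t / ((t : ℝ) + 1 + w) ^ p) + β ^ (t / 2 : ℕ)) := by
  obtain ⟨hβ0, hβ1⟩ := hβ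
  set c : ℕ → ℝ := fun r => 1 - a / ((r : ℝ) + w) ^ p with hc
  have hwp : (0:ℝ) < w ^ p := Real.rpow_pos_of_pos hw p
  have hrwpos : ∀ r : ℕ, (0:ℝ) < ((r : ℝ) + w) ^ p := fun r =>
    Real.rpow_pos_of_pos (by positivity) p
  have hmono : ∀ r s : ℕ, r ≤ s → ((r : ℝ) + w) ^ p ≤ ((s : ℝ) + w) ^ p := by
    intro r s hrs
    have hrs' : (r : ℝ) + w ≤ (s : ℝ) + w := add_le_add_left (Nat.cast_le.mpr hrs) w
    exact Real.rpow_le_rpow (by positivity) hrs' hp.le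
  have hwle : ∀ r : ℕ, w ^ p ≤ ((r : ℝ) + w) ^ p := by
    intro r
    exact Real.rpow_le_rpow hw.le (le_add_of_nonneg_left (Nat.cast_nonneg r)) hp.le
  have hc_pos : ∀ r : ℕ, 0 < c r := by
    intro r
    have h1 : a / ((r : ℝ) + w) ^ p ≤ a / w ^ p :=
      div_le_div_of_nonneg_left ha.le hwp (hwle r)
    simp only [hc]
    linarith
  have hc_lt1 : ∀ r : ℕ, c r < 1 := by
    intro r
    have : 0 < a / ((r : ℝ) + w) ^ p := div_pos ha (hrwpos r)
    simp only [hc]; linarith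
  -- unrolled recursion
  have unroll : ∀ t : ℕ, B (t + 1) ≤ ∑ s ∈ Finset.range (t + 1),
      (∏ r ∈ Finset.Ico (s + 1) (t + 1), c r) * (b * β ^ s / ((s : ℝ) + w) ^ p) := by
    intro t
    induction t with
    | zero =>
      have := hrec 0
      simpa [hB0] using this
    | succ t ih =>
      have h1 := hrec (t + 1)
      have h2 : B (t + 1 + 1) ≤ c (t + 1) * (∑ s ∈ Finset.range (t + 1),
          (∏ r ∈ Finset.Ico (s + 1) (t + 1), c r) * (b * β ^ s / ((s : ℝ) + w) ^ p))
          + b * β ^ (t + 1) / (((t + 1 : ℕ) : ℝ) + w) ^ p := by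
        refine h1.trans ?_
        gcongr
        exact (hc_pos (t + 1)).le
      refine h2.trans ?_
      conv_rhs => rw [Finset.sum_range_succ]
      have hlast : (∏ r ∈ Finset.Ico (t + 1 + 1) (t + 1 + 1), c r) = 1 := by
        simp
      rw [hlast, one_mul, Finset.mul_sum]
      apply add_le_add_left
      apply le_of_eq
      apply Finset.sum_congr rfl
      intro s hs
      have hst : s + 1 ≤ t + 1 := by
        simp only [Finset.mem_range] at hs; omega
      rw [Finset.prod_Ico_succ_top hst]
      ring
  intro t
  refine (unroll t).trans ?_
  set K := t / 2 with hK
  set E := Real.exp (-(a / 2) * t / ((t : ℝ) + 1 + w) ^ p) with hE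
  have hEpos : 0 < E := Real.exp_pos _
  -- product bound for small s
  have hprod_small : ∀ s : ℕ, s ≤ K → (∏ r ∈ Finset.Ico (s + 1) (t + 1), c r) ≤ E := by
    intro s hs
    have hst : s ≤ t := by omega
    have step1 : (∏ r ∈ Finset.Ico (s + 1) (t + 1), c r) ≤
        (Real.exp (-(a / ((t : ℝ) + w) ^ p))) ^ (t - s) := by
      have hcard : (Finset.Ico (s + 1) (t + 1)).card = t - s := by
        rw [Nat.card_Ico]; omega
      rw [← hcard, ← Finset.prod_const]
      apply Finset.prod_le_prod (fun r _ => (hc_pos r).le)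
      intro r hr
      have hrt : r ≤ t := by
        simp only [Finset.mem_Ico] at hr; omega
      have h1 : a / ((t : ℝ) + w) ^ p ≤ a / ((r : ℝ) + w) ^ p :=
        div_le_div_of_nonneg_left ha.le (hrwpos r) (hmono r t hrt)
      have h2 : c r ≤ 1 - a / ((t : ℝ) + w) ^ p := by
        simp only [hc]; linarith
      refine h2.trans ?_
      have := Real.add_one_le_exp (-(a / ((t : ℝ) + w) ^ p))
      linarith
    refine step1.trans ?_
    rw [← Real.exp_nat_mul]
    apply Real.exp_le_exp.mpr
    have hcast : ((t - s : ℕ) : ℝ) = (t : ℝ) - s := by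
      push_cast [Nat.cast_sub hst]; ring
    rw [hcast]
    have hs2 : (s : ℝ) ≤ (t : ℝ) / 2 := by
      have : (s : ℝ) ≤ ((K : ℕ) : ℝ) := Nat.cast_le.mpr hs
      refine this.trans ?_
      rw [hK]
      exact (Nat.cast_div_le).trans (by norm_num)
    have hdle : ((t : ℝ) + w) ^ p ≤ ((t : ℝ) + 1 + w) ^ p := by
      apply Real.rpow_le_rpow (by positivity) (by linarith) hp.le
    have hts : (0:ℝ) ≤ (t : ℝ) - s := by
      have := Nat.cast_nonneg (α := ℝ) t
      linarith
    have key : a / 2 * t / ((t : ℝ) + 1 + w) ^ p ≤ ((t : ℝ) - s) * (a / ((t : ℝ) + w) ^ p) := by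
      calc a / 2 * t / ((t : ℝ) + 1 + w) ^ p
          = (a * t / 2) / ((t : ℝ) + 1 + w) ^ p := by ring
        _ ≤ (a * t / 2) / ((t : ℝ) + w) ^ p :=
            div_le_div_of_nonneg_left (by positivity) (hrwpos t) hdle
        _ ≤ (((t : ℝ) - s) * a) / ((t : ℝ) + w) ^ p := by
            apply div_le_div₀ (by nlinarith) (by nlinarith) (hrwpos t) le_rfl
        _ = ((t : ℝ) - s) * (a / ((t : ℝ) + w) ^ p) := by ring
    have : ((t : ℝ) - s) * -(a / ((t : ℝ) + w) ^ p) = -(((t : ℝ) - s) * (a / ((t : ℝ) + w) ^ p)) := by ring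
    rw [this]
    rw [show -(a / 2) * t / ((t : ℝ) + 1 + w) ^ p = -(a / 2 * t / ((t : ℝ) + 1 + w) ^ p) by ring]
    exact neg_le_neg key
  have hprod_one : ∀ s : ℕ, (∏ r ∈ Finset.Ico (s + 1) (t + 1), c r) ≤ 1 := by
    intro s
    exact Finset.prod_le_one (fun r _ => (hc_pos r).le) (fun r _ => (hc_lt1 r).le)
  have hterm : ∀ s : ℕ, b * β ^ s / ((s : ℝ) + w) ^ p ≤ b * β ^ s / w ^ p := by
    intro s
    apply div_le_div_of_nonneg_left (by positivity) hwp (hwle s)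
  have htermpos : ∀ s : ℕ, 0 ≤ b * β ^ s / ((s : ℝ) + w) ^ p := by
    intro s; positivity
  have hKt : K + 1 ≤ t + 1 := by omega
  rw [Finset.range_eq_Ico, ← Finset.sum_Ico_consecutive _ (Nat.zero_le (K + 1)) hKt]
  have hsum1 : ∑ s ∈ Finset.Ico 0 (K + 1),
      (∏ r ∈ Finset.Ico (s + 1) (t + 1), c r) * (b * β ^ s / ((s : ℝ) + w) ^ p)
      ≤ E * (b / (w ^ p * (1 - β))) := by
    calc ∑ s ∈ Finset.Ico 0 (K + 1),
        (∏ r ∈ Finset.Ico (s + 1) (t + 1), c r) * (b * β ^ s / ((s : ℝ) + w) ^ p)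
        ≤ ∑ s ∈ Finset.Ico 0 (K + 1), E * (b * β ^ s / w ^ p) := by
          apply Finset.sum_le_sum
          intro s hs
          have hsK : s ≤ K := by simp only [Finset.mem_Ico] at hs; omega
          apply mul_le_mul (hprod_small s hsK) (hterm s) (htermpos s) hEpos.le
      _ = E * (b / w ^ p) * ∑ s ∈ Finset.range (K + 1), β ^ s := by
          rw [← Finset.range_eq_Ico, Finset.mul_sum]
          apply Finset.sum_congr rfl; intro s _; ring
      _ ≤ E * (b / w ^ p) * (1 / (1 - β)) := by
          apply mul_le_mul_of_nonneg_left _ (by positivity)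
          rw [geom_sum_eq hβ1.ne, show (β^(K+1)-1)/(β-1) = (1-β^(K+1))/(1-β) by
            rw [← neg_div_neg_eq]; ring_nf]
          exact div_le_div₀ (by norm_num) (by nlinarith [pow_nonneg hβ0.le (K+1)]) (by linarith) le_rfl
      _ = E * (b / (w ^ p * (1 - β))) := by
          field_simp
  have hsum2 : ∑ s ∈ Finset.Ico (K + 1) (t + 1),
      (∏ r ∈ Finset.Ico (s + 1) (t + 1), c r) * (b * β ^ s / ((s : ℝ) + w) ^ p)
      ≤ β ^ K * (b / (w ^ p * (1 - β))) := by
    calc ∑ s ∈ Finset.Ico (K + 1) (t + 1),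
        (∏ r ∈ Finset.Ico (s + 1) (t + 1), c r) * (b * β ^ s / ((s : ℝ) + w) ^ p)
        ≤ ∑ s ∈ Finset.Ico (K + 1) (t + 1), b / w ^ p * β ^ s := by
          apply Finset.sum_le_sum
          intro s _
          calc (∏ r ∈ Finset.Ico (s + 1) (t + 1), c r) * (b * β ^ s / ((s : ℝ) + w) ^ p)
              ≤ 1 * (b * β ^ s / w ^ p) :=
                mul_le_mul (hprod_one s) (hterm s) (htermpos s) zero_le_one
            _ = b / w ^ p * β ^ s := by ring
      _ = b / w ^ p * ∑ s ∈ Finset.Ico (K + 1) (t + 1), β ^ s := by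
          rw [Finset.mul_sum]
      _ ≤ b / w ^ p * (β ^ K / (1 - β)) := by
          apply mul_le_mul_of_nonneg_left _ (by positivity)
          refine (geom_sum_Ico_le_of_lt_one hβ0.le hβ1).trans ?_
          apply div_le_div₀ (by positivity) ?_ (by linarith) le_rfl
          exact pow_le_pow_of_le_one hβ0.le hβ1.le (by omega)
      _ = β ^ K * (b / (w ^ p * (1 - β))) := by
          field_simp
  calc _ ≤ E * (b / (w ^ p * (1 - β))) + β ^ K * (b / (w ^ p * (1 - β))) :=
        add_le_add hsum1 hsum2
    _ = b / (w ^ p * (1 - β)) * (E + β ^ K) := by ring
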